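/- arXiv:1711.06447 — 4 statements merged into one kernel-verified Lean document; each statement's English description precedes it below -/
import Mathlib

section
/- For any nonzero vectors u, v in ℝ^d, the absolute difference of their log-norms satisfies |log |u| - log |v|| ≤ |u - v|^{1/2} · (|u|^{-1/2} + |v|^{-1/2}). -/
open Real

lemma two_log_le (t : ℝ) (ht : 1 ≤ t) : 2 * Real.log t ≤ t - 1 / t := by
  have hmono : MonotoneOn (fun s : ℝ => s - 1 / s - 2 * Real.log s) (Set.Ici 1) := by
    apply monotoneOn_of_deriv_nonneg (convex_Ici 1)
    · apply ContinuousOn.sub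
      · apply ContinuousOn.sub continuousOn_id
        exact continuousOn_const.div continuousOn_id fun x hx => by
          have : (1:ℝ) ≤ x := hx; linarith
      · exact continuousOn_const.mul (Real.continuousOn_log.mono fun x hx => by
          have : (1:ℝ) ≤ x := hx; simp; linarith)
    · intro x hx
      rw [interior_Ici] at hx
      have hx1 : (1:ℝ) < x := hx
      have hx0 : x ≠ 0 := by linarith
      apply DifferentiableAt.differentiableWithinAt
      exact ((differentiableAt_id.sub ((differentiableAt_const 1).div differentiableAt_id hx0)).sub
        ((Real.differentiableAt_log hx0).const_mul 2))
    · intro x hx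
      rw [interior_Ici] at hx
      have hx1 : (1:ℝ) < x := hx
      have hx0 : x ≠ 0 := by linarith
      have hd : HasDerivAt (fun s : ℝ => s - 1 / s - 2 * Real.log s)
          (1 - (-(1 / x ^ 2)) - 2 * x⁻¹) x := by
        have h1 : HasDerivAt (fun s : ℝ => 1 / s) (-(1 / x ^ 2)) x := by
          simpa using (hasDerivAt_inv hx0)
        exact ((hasDerivAt_id x).sub h1).sub ((Real.hasDerivAt_log hx0).const_mul 2)
      rw [hd.deriv]
      have h2 : 0 < x := by linarith
      have h3 : 1 - (-(1 / x ^ 2)) - 2 * x⁻¹ = (x - 1)^2 / x^2 := by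
        field_simp; ring
      rw [h3]
      positivity
  have h := hmono (by simp : (1:ℝ) ∈ Set.Ici 1) (by exact ht) ht
  simp only [Real.log_one] at h
  norm_num at h
  simpa [one_div] using h

lemma log_le_sqrt_sub_one (x : ℝ) (hx : 1 ≤ x) : Real.log x ≤ Real.sqrt (x - 1) := by
  have hx0 : 0 < x := by linarith
  have ht : 1 ≤ Real.sqrt x := by
    rw [show (1:ℝ) = Real.sqrt 1 by simp]
    exact Real.sqrt_le_sqrt hx
  have h1 : 2 * Real.log (Real.sqrt x) ≤ Real.sqrt x - 1 / Real.sqrt x := two_log_le _ ht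
  rw [Real.log_sqrt hx0.le] at h1
  have hs : Real.sqrt x * Real.sqrt x = x := Real.mul_self_sqrt hx0.le
  have hs0 : 0 < Real.sqrt x := by linarith
  have e : Real.sqrt x - 1 / Real.sqrt x = (x - 1) / Real.sqrt x := by
    field_simp
    rw [Real.sq_sqrt hx0.le]
  have h2 : Real.log x ≤ (x - 1) / Real.sqrt x := by linarith
  refine h2.trans ?_
  rw [div_le_iff₀ hs0]
  have hsub : 0 ≤ x - 1 := by linarith
  have h3 : Real.sqrt (x-1) * Real.sqrt (x-1) = x - 1 := Real.mul_self_sqrt hsub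
  have h4 : Real.sqrt (x - 1) ≤ Real.sqrt x := Real.sqrt_le_sqrt (by linarith)
  nlinarith [Real.sqrt_nonneg (x-1)]

lemma log_sub_log_le (a b : ℝ) (hb : 0 < b) (hab : b ≤ a) :
    Real.log a - Real.log b ≤ Real.sqrt (a - b) / Real.sqrt b := by
  have ha : 0 < a := lt_of_lt_of_le hb hab
  rw [← Real.log_div ha.ne' hb.ne']
  have h1 : (1:ℝ) ≤ a / b := (one_le_div hb).mpr hab
  have h := log_le_sqrt_sub_one (a/b) h1
  rwa [show a / b - 1 = (a - b) / b by field_simp,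
    Real.sqrt_div (by linarith : (0:ℝ) ≤ a - b) b] at h

theorem log_norm_diff_le (d : ℕ) (u v : EuclideanSpace ℝ (Fin d)) (hu : u ≠ 0) (hv : v ≠ 0) :
    |Real.log ‖u‖ - Real.log ‖v‖| ≤
      ‖u - v‖ ^ ((1 : ℝ) / 2) * (‖u‖ ^ (-(1 : ℝ) / 2) + ‖v‖ ^ (-(1 : ℝ) / 2)) := by
  have hu0 : 0 < ‖u‖ := norm_pos_iff.mpr hu
  have hv0 : 0 < ‖v‖ := norm_pos_iff.mpr hv
  have key : ∀ a b : EuclideanSpace ℝ (Fin d), 0 < ‖a‖ → 0 < ‖b‖ → ‖b‖ ≤ ‖a‖ →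
      Real.log ‖a‖ - Real.log ‖b‖ ≤
        ‖a - b‖ ^ ((1 : ℝ) / 2) * (‖a‖ ^ (-(1 : ℝ) / 2) + ‖b‖ ^ (-(1 : ℝ) / 2)) := by
    intro a b ha0 hb0 hba
    have h1 : Real.log ‖a‖ - Real.log ‖b‖ ≤ Real.sqrt (‖a‖ - ‖b‖) / Real.sqrt ‖b‖ :=
      log_sub_log_le _ _ hb0 hba
    have h2 : Real.sqrt (‖a‖ - ‖b‖) ≤ Real.sqrt ‖a - b‖ := by
      apply Real.sqrt_le_sqrt
      calc ‖a‖ - ‖b‖ ≤ |‖a‖ - ‖b‖| := le_abs_self _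
        _ ≤ ‖a - b‖ := abs_norm_sub_norm_le a b
    have hrw : ‖a - b‖ ^ ((1:ℝ)/2) = Real.sqrt ‖a - b‖ := (Real.sqrt_eq_rpow _).symm
    have hrb : ‖b‖ ^ (-(1:ℝ)/2) = 1 / Real.sqrt ‖b‖ := by
      rw [neg_div, Real.rpow_neg hb0.le, ← Real.sqrt_eq_rpow, one_div]
    have hra : 0 ≤ ‖a‖ ^ (-(1:ℝ)/2) := Real.rpow_nonneg (norm_nonneg _) _
    have hsb : 0 < Real.sqrt ‖b‖ := Real.sqrt_pos.mpr hb0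
    calc Real.log ‖a‖ - Real.log ‖b‖ ≤ Real.sqrt (‖a‖ - ‖b‖) / Real.sqrt ‖b‖ := h1
      _ ≤ Real.sqrt ‖a - b‖ / Real.sqrt ‖b‖ := by gcongr
      _ = Real.sqrt ‖a - b‖ * (1 / Real.sqrt ‖b‖) := by ring
      _ ≤ Real.sqrt ‖a - b‖ * (‖a‖ ^ (-(1:ℝ)/2) + 1 / Real.sqrt ‖b‖) := by
          apply mul_le_mul_of_nonneg_left _ (Real.sqrt_nonneg _)
          linarith
      _ = ‖a - b‖ ^ ((1:ℝ)/2) * (‖a‖ ^ (-(1:ℝ)/2) + ‖b‖ ^ (-(1:ℝ)/2)) := by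
          rw [hrw, hrb]
  rcases le_total ‖v‖ ‖u‖ with h | h
  · rw [abs_of_nonneg (sub_nonneg.mpr (Real.log_le_log hv0 h))]
    exact key u v hu0 hv0 h
  · rw [abs_sub_comm, abs_of_nonneg (sub_nonneg.mpr (Real.log_le_log hu0 h))]
    have := key v u hv0 hu0 h
    rwa [norm_sub_rev, add_comm] at this
end

section
/- Let d ≥ 1 and 0 < α < d. There exists a constant C = C(α, d) > 0 such that for every nonzero x ∈ ℝ^d and every t > 0, ∫_{ℝ^d} p_t(y) |y - x|^{-α} dy ≤ C |x|^{-α}, where p_t(y) = (2πt)^{-d/2} exp(-|y|²/(2t)) is the Gaussian heat kernel. -/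
open MeasureTheory Real Filter Topology

open Set Module Metric

lemma aux_pow_exp {q u : ℝ} (hq : 0 ≤ q) (hu : 0 ≤ u) : u ^ q * Real.exp (-u) ≤ q ^ q := by
  rcases eq_or_lt_of_le hq with hq0 | hq0
  · rw [← hq0]
    simp only [Real.rpow_zero, one_mul]
    exact Real.exp_le_one_iff.2 (by linarith)
  rcases eq_or_lt_of_le hu with hu0 | hu0
  · rw [← hu0, Real.zero_rpow hq0.ne']
    simpa using Real.rpow_nonneg hq _
  · set w := u / q with hw
    have hwpos : 0 < w := div_pos hu0 hq0
    have h1 : u = q * w := by rw [hw, mul_div_assoc', eq_div_iff hq0.ne', mul_comm]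
    have h2 : u ^ q = q ^ q * w ^ q := by rw [h1, Real.mul_rpow hq hwpos.le]
    have h3 : Real.exp (-u) = (Real.exp (-w)) ^ q := by
      rw [Real.rpow_def_of_pos (Real.exp_pos _), Real.log_exp, h1]; ring_nf
    have h4 : w * Real.exp (-w) ≤ 1 := by
      rw [Real.exp_neg, mul_inv_le_iff₀ (Real.exp_pos _), one_mul]
      linarith [Real.add_one_le_exp w]
    calc u ^ q * Real.exp (-u) = q ^ q * (w * Real.exp (-w)) ^ q := by
          rw [h2, h3, Real.mul_rpow hwpos.le (Real.exp_pos _).le]; ring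
      _ ≤ q ^ q * 1 ^ q := by gcongr
      _ = q ^ q := by simp

lemma aux_t_bound (d : ℕ) {r t : ℝ} (hr : 0 < r) (ht : 0 < t) :
    t ^ (-(d:ℝ)/2) * Real.exp (-(r^2/(8*t))) ≤ (4*(d:ℝ))^((d:ℝ)/2) * r ^ (-(d:ℝ)) := by
  set u := r^2/(8*t) with hu_def
  have hu : 0 < u := by positivity
  have hts : t ^ (-(d:ℝ)/2) = 8 ^ ((d:ℝ)/2) * u ^ ((d:ℝ)/2) * r ^ (-(d:ℝ)) := by
    have h1 : t⁻¹ = 8 * u / r^2 := by rw [hu_def]; field_simp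
    rw [neg_div, Real.rpow_neg ht.le, ← Real.inv_rpow ht.le, h1, div_eq_mul_inv,
      Real.mul_rpow (by positivity) (by positivity),
      Real.mul_rpow (by norm_num) hu.le, Real.inv_rpow (by positivity),
      ← Real.rpow_neg (by positivity), ← Real.rpow_natCast r 2, ← Real.rpow_mul hr.le]
    congr 1
    ring
  calc t ^ (-(d:ℝ)/2) * Real.exp (-u)
      = 8 ^ ((d:ℝ)/2) * r ^ (-(d:ℝ)) * (u ^ ((d:ℝ)/2) * Real.exp (-u)) := by rw [hts]; ring
    _ ≤ 8 ^ ((d:ℝ)/2) * r ^ (-(d:ℝ)) * ((d:ℝ)/2) ^ ((d:ℝ)/2) := by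
        gcongr
        exact aux_pow_exp (by positivity) hu.le
    _ = (4*(d:ℝ))^((d:ℝ)/2) * r ^ (-(d:ℝ)) := by
        have h8 : (8:ℝ) ^ ((d:ℝ)/2) * ((d:ℝ)/2) ^ ((d:ℝ)/2) = (4*(d:ℝ))^((d:ℝ)/2) := by
          rw [← Real.mul_rpow (by norm_num) (by positivity)]
          congr 1
          ring
        calc 8 ^ ((d:ℝ)/2) * r ^ (-(d:ℝ)) * ((d:ℝ)/2) ^ ((d:ℝ)/2)
            = (8 ^ ((d:ℝ)/2) * ((d:ℝ)/2) ^ ((d:ℝ)/2)) * r ^ (-(d:ℝ)) := by ring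
          _ = (4*(d:ℝ))^((d:ℝ)/2) * r ^ (-(d:ℝ)) := by rw [h8]

lemma gauss_integrable {d : ℕ} {b : ℝ} (hb : 0 < b) :
    Integrable (fun v : EuclideanSpace ℝ (Fin d) => Real.exp (-b * ‖v‖ ^ 2)) := by
  have h := (GaussianFourier.integrable_cexp_neg_mul_sq_norm_add
    (V := EuclideanSpace ℝ (Fin d)) (b := (b : ℂ)) (by simpa using hb) 0 0).norm
  refine h.congr (Eventually.of_forall fun v => ?_)
  simp only [zero_mul, add_zero, Complex.norm_exp]
  norm_num [← Complex.ofReal_pow]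

lemma gauss_integral {d : ℕ} {b : ℝ} (hb : 0 < b) :
    ∫ v : EuclideanSpace ℝ (Fin d), Real.exp (-b * ‖v‖ ^ 2) = (π / b) ^ ((d : ℝ) / 2) := by
  have := GaussianFourier.integral_rexp_neg_mul_sq_norm (V := EuclideanSpace ℝ (Fin d)) hb
  simp only [neg_mul] at this ⊢
  rw [this]
  norm_num

lemma riesz_meas {d : ℕ} (α : ℝ) :
    Measurable (fun z : EuclideanSpace ℝ (Fin d) => ‖z‖ ^ (-α)) := by fun_prop

lemma riesz_integrableOn {d : ℕ} {α R : ℝ} (hα0 : 0 < α) (hαd : α < d) (hR : 0 < R) :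
    IntegrableOn (fun z : EuclideanSpace ℝ (Fin d) => ‖z‖ ^ (-α)) (Metric.ball 0 R) := by
  have hmeas := riesz_meas (d := d) α
  constructor
  · exact hmeas.aestronglyMeasurable
  have hnn : ∀ z : EuclideanSpace ℝ (Fin d), 0 ≤ ‖z‖ ^ (-α) := fun z => rpow_nonneg (norm_nonneg z) _
  have key : (∫⁻ z in Metric.ball (0 : EuclideanSpace ℝ (Fin d)) R,
      ENNReal.ofReal (‖z‖ ^ (-α))) < ⊤ := by
    rw [lintegral_eq_lintegral_meas_le _ (Eventually.of_forall hnn) hmeas.aemeasurable]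
    have hsub : ∀ t : ℝ, 0 < t → {a : EuclideanSpace ℝ (Fin d) | t ≤ ‖a‖ ^ (-α)} ⊆
        Metric.closedBall 0 (t ^ (-α)⁻¹) := by
      intro t ht a ha
      simp only [mem_setOf_eq] at ha
      have hna : 0 < ‖a‖ := by
        rcases eq_or_lt_of_le (norm_nonneg a) with h | h
        · exfalso
          rw [← h, Real.zero_rpow (by linarith : -α ≠ 0)] at ha
          linarith
        · exact h
      rw [mem_closedBall_zero_iff]
      exact (Real.le_rpow_inv_iff_of_neg hna ht (by linarith : -α < 0)).2 ha
    calc ∫⁻ t in Ioi (0:ℝ), (volume.restrict (Metric.ball (0 : EuclideanSpace ℝ (Fin d)) R))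
            {a | t ≤ ‖a‖ ^ (-α)}
        ≤ ∫⁻ t in Ioc (0:ℝ) 1 ∪ Ioi 1, _ := lintegral_mono_set Ioi_subset_Ioc_union_Ioi
      _ ≤ (∫⁻ t in Ioc (0:ℝ) 1, (volume.restrict (Metric.ball (0 : EuclideanSpace ℝ (Fin d)) R))
            {a | t ≤ ‖a‖ ^ (-α)}) + ∫⁻ t in Ioi (1:ℝ), (volume.restrict (Metric.ball (0 : EuclideanSpace ℝ (Fin d)) R))
            {a | t ≤ ‖a‖ ^ (-α)} := lintegral_union_le _ _ _
      _ < ⊤ := by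
          rw [ENNReal.add_lt_top]
          constructor
          · calc ∫⁻ t in Ioc (0:ℝ) 1, (volume.restrict (Metric.ball (0 : EuclideanSpace ℝ (Fin d)) R))
                  {a | t ≤ ‖a‖ ^ (-α)}
                ≤ ∫⁻ _ in Ioc (0:ℝ) 1, volume (Metric.ball (0 : EuclideanSpace ℝ (Fin d)) R) := by
                  refine lintegral_mono fun t => ?_
                  exact le_trans (measure_mono (subset_univ _)) (le_of_eq (Measure.restrict_apply_univ _))
              _ < ⊤ := by
                  rw [setLIntegral_const]
                  exact ENNReal.mul_lt_top measure_ball_lt_top measure_Ioc_lt_top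
          · calc ∫⁻ t in Ioi (1:ℝ), (volume.restrict (Metric.ball (0 : EuclideanSpace ℝ (Fin d)) R))
                  {a | t ≤ ‖a‖ ^ (-α)}
                ≤ ∫⁻ t in Ioi (1:ℝ), ENNReal.ofReal (t ^ ((-α)⁻¹ * d)) * volume (Metric.ball (0 : EuclideanSpace ℝ (Fin d)) 1) := by
                  refine setLIntegral_mono' measurableSet_Ioi fun t ht => ?_
                  have ht0 : (0:ℝ) < t := lt_trans one_pos ht
                  refine le_trans (Measure.restrict_le_self _) ?_
                  refine le_trans (measure_mono (hsub t ht0)) ?_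
                  rw [Measure.addHaar_closedBall _ _ (by positivity)]
                  rw [finrank_euclideanSpace_fin, ← Real.rpow_natCast (t ^ (-α)⁻¹) d,
                    ← Real.rpow_mul ht0.le]
              _ = (∫⁻ t in Ioi (1:ℝ), ENNReal.ofReal (t ^ ((-α)⁻¹ * d))) *
                    volume (Metric.ball (0 : EuclideanSpace ℝ (Fin d)) 1) :=
                  lintegral_mul_const' _ _ measure_ball_lt_top.ne
              _ < ⊤ := by
                  refine ENNReal.mul_lt_top ?_ measure_ball_lt_top
                  refine IntegrableOn.setLIntegral_lt_top ?_
                  refine integrableOn_Ioi_rpow_of_lt ?_ one_pos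
                  have hc : (-α)⁻¹ * d = -((d:ℝ) / α) := by
                    rw [inv_neg]
                    field_simp
                  rw [hc, neg_lt_neg_iff, lt_div_iff₀ (by linarith)]
                  linarith
  exact (hasFiniteIntegral_iff_ofReal (Eventually.of_forall fun z => hnn z)).2 key

lemma indicator_shift {d : ℕ} {α : ℝ} (x : EuclideanSpace ℝ (Fin d)) (ρ : ℝ)
    (y : EuclideanSpace ℝ (Fin d)) :
    (Metric.ball x ρ).indicator (fun y => ‖y - x‖ ^ (-α)) y
      = (Metric.ball (0 : EuclideanSpace ℝ (Fin d)) ρ).indicator (fun z => ‖z‖ ^ (-α)) (y - x) := by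
  by_cases h : y ∈ Metric.ball x ρ
  · rw [indicator_of_mem h, indicator_of_mem (by simpa [mem_ball_iff_norm, dist_eq_norm] using h)]
  · rw [indicator_of_notMem h, indicator_of_notMem (by simpa [mem_ball_iff_norm, dist_eq_norm] using h)]

lemma riesz_shift_integrable {d : ℕ} {α : ℝ} (hα0 : 0 < α) (hαd : α < d)
    (x : EuclideanSpace ℝ (Fin d)) {ρ : ℝ} (hρ : 0 < ρ) :
    Integrable ((Metric.ball x ρ).indicator (fun y => ‖y - x‖ ^ (-α))) := by
  have h1 : Integrable ((Metric.ball (0 : EuclideanSpace ℝ (Fin d)) ρ).indicator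
      (fun z => ‖z‖ ^ (-α))) := by
    rw [integrable_indicator_iff measurableSet_ball]
    exact riesz_integrableOn hα0 hαd hρ
  have h2 := h1.comp_sub_right x
  exact h2.congr (Eventually.of_forall fun y => (indicator_shift x ρ y).symm)

lemma riesz_shift_integral {d : ℕ} {α : ℝ} (x : EuclideanSpace ℝ (Fin d)) {ρ : ℝ} :
    ∫ y, (Metric.ball x ρ).indicator (fun y => ‖y - x‖ ^ (-α)) y
      = ∫ z in Metric.ball (0 : EuclideanSpace ℝ (Fin d)) ρ, ‖z‖ ^ (-α) := by
  rw [← integral_indicator measurableSet_ball]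
  rw [show (fun y => (Metric.ball x ρ).indicator (fun y => ‖y - x‖ ^ (-α)) y)
      = fun y => (Metric.ball (0 : EuclideanSpace ℝ (Fin d)) ρ).indicator
        (fun z => ‖z‖ ^ (-α)) (y - x) from funext (indicator_shift x ρ)]
  exact integral_sub_right_eq_self _ x

lemma riesz_scaling {d : ℕ} {α : ℝ} {ρ : ℝ} (hρ : 0 < ρ) :
    ∫ z in Metric.ball (0 : EuclideanSpace ℝ (Fin d)) ρ, ‖z‖ ^ (-α)
      = ρ ^ ((d : ℝ) - α) * ∫ z in Metric.ball (0 : EuclideanSpace ℝ (Fin d)) 1, ‖z‖ ^ (-α) := by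
  have key := Measure.integral_comp_smul (μ := volume)
    (f := (Metric.ball (0 : EuclideanSpace ℝ (Fin d)) 1).indicator (fun z => ‖z‖ ^ (-α))) ρ⁻¹
  have hρd : ((ρ⁻¹ : ℝ) ^ finrank ℝ (EuclideanSpace ℝ (Fin d)))⁻¹ = ρ ^ (d : ℕ) := by
    rw [finrank_euclideanSpace_fin, ← inv_pow, inv_inv]
  rw [hρd] at key
  have lhs_eq : ∀ y : EuclideanSpace ℝ (Fin d),
      (Metric.ball (0 : EuclideanSpace ℝ (Fin d)) 1).indicator (fun z => ‖z‖ ^ (-α)) (ρ⁻¹ • y)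
      = ρ ^ α * (Metric.ball (0 : EuclideanSpace ℝ (Fin d)) ρ).indicator (fun z => ‖z‖ ^ (-α)) y := by
    intro y
    have hmem : (ρ⁻¹ • y ∈ Metric.ball (0 : EuclideanSpace ℝ (Fin d)) 1)
        ↔ y ∈ Metric.ball (0 : EuclideanSpace ℝ (Fin d)) ρ := by
      rw [mem_ball_zero_iff, mem_ball_zero_iff, norm_smul, norm_inv, Real.norm_eq_abs,
        abs_of_pos hρ, inv_mul_lt_iff₀ hρ, mul_one]
    by_cases h : y ∈ Metric.ball (0 : EuclideanSpace ℝ (Fin d)) ρ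
    · rw [indicator_of_mem (hmem.2 h), indicator_of_mem h, norm_smul, norm_inv,
        Real.norm_eq_abs, abs_of_pos hρ, Real.mul_rpow (by positivity) (norm_nonneg y),
        Real.inv_rpow hρ.le, ← Real.rpow_neg hρ.le, neg_neg]
    · rw [indicator_of_notMem (fun hh => h (hmem.1 hh)), indicator_of_notMem h, mul_zero]
  rw [funext lhs_eq] at key
  rw [integral_const_mul, abs_of_pos (pow_pos hρ d)] at key
  rw [← integral_indicator measurableSet_ball, ← integral_indicator measurableSet_ball]
  have hkey2 : ∫ z, (Metric.ball (0 : EuclideanSpace ℝ (Fin d)) ρ).indicator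
      (fun z => ‖z‖ ^ (-α)) z
      = ρ ^ (-α) * (ρ ^ (d:ℕ) • ∫ z, (Metric.ball (0 : EuclideanSpace ℝ (Fin d)) 1).indicator
        (fun z => ‖z‖ ^ (-α)) z) := by
    rw [← key, ← mul_assoc, ← Real.rpow_add hρ, neg_add_cancel, Real.rpow_zero, one_mul]
  rw [hkey2, smul_eq_mul, ← mul_assoc]
  congr 1
  rw [← Real.rpow_natCast ρ d, ← Real.rpow_add hρ]
  ring_nf

noncomputable def heatKernel (d : ℕ) (t : ℝ) (y : EuclideanSpace ℝ (Fin d)) : ℝ :=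
  (2 * Real.pi * t) ^ (-(d : ℝ) / 2) * Real.exp (-‖y‖ ^ 2 / (2 * t))

theorem heat_kernel_riesz_bound (d : ℕ) (hd : 1 ≤ d) (α : ℝ) (hα0 : 0 < α) (hαd : α < d) :
    ∃ C > 0, ∀ x : EuclideanSpace ℝ (Fin d), x ≠ 0 → ∀ t : ℝ, 0 < t →
      (∫ y, heatKernel d t y * ‖y - x‖ ^ (-α)) ≤ C * ‖x‖ ^ (-α) := by
  classical
  set J := ∫ z in Metric.ball (0 : EuclideanSpace ℝ (Fin d)) 1, ‖z‖ ^ (-α) with hJdef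
  have hJ : 0 ≤ J :=
    setIntegral_nonneg measurableSet_ball (fun z _ => Real.rpow_nonneg (norm_nonneg z) _)
  refine ⟨2 ^ α + (2*π) ^ (-(d:ℝ)/2) * (4*(d:ℝ)) ^ ((d:ℝ)/2) * 2 ^ (α - (d:ℝ)) * J, ?_, ?_⟩
  · have h1 : (0:ℝ) < 2 ^ α := Real.rpow_pos_of_pos two_pos α
    have h2 : (0:ℝ) ≤ (2*π) ^ (-(d:ℝ)/2) * (4*(d:ℝ)) ^ ((d:ℝ)/2) * 2 ^ (α - (d:ℝ)) * J :=
      mul_nonneg (by positivity) hJ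
    linarith
  intro x hx t ht
  set r := ‖x‖ with hr_def
  have hr : 0 < r := norm_pos_iff.mpr hx
  set ρ := r / 2 with hρ_def
  have hρ : 0 < ρ := by positivity
  have hb : 0 < 1 / (2*t) := by positivity
  have h2πt : (0:ℝ) < 2*π*t := by positivity
  have hHK : ∀ y : EuclideanSpace ℝ (Fin d), heatKernel d t y
      = (2*π*t) ^ (-(d:ℝ)/2) * Real.exp (-(1/(2*t)) * ‖y‖^2) := by
    intro y
    unfold heatKernel
    congr 2
    ring
  have hHK_nonneg : ∀ y, 0 ≤ heatKernel d t y := by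
    intro y; unfold heatKernel; positivity
  have hHK_int : Integrable (fun y : EuclideanSpace ℝ (Fin d) => heatKernel d t y) := by
    have h := (gauss_integrable (d := d) hb).const_mul ((2*π*t) ^ (-(d:ℝ)/2))
    exact h.congr (Eventually.of_forall fun y => (hHK y).symm)
  have hHK_integral : ∫ y, heatKernel d t y = 1 := by
    calc ∫ y, heatKernel d t y
        = ∫ y : EuclideanSpace ℝ (Fin d),
            (2*π*t) ^ (-(d:ℝ)/2) * Real.exp (-(1/(2*t)) * ‖y‖^2) := by simp only [hHK]
      _ = (2*π*t) ^ (-(d:ℝ)/2) * (π / (1/(2*t))) ^ ((d:ℝ)/2) := by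
          rw [integral_const_mul, gauss_integral hb]
      _ = 1 := by
          have hdiv : π / (1/(2*t)) = 2*π*t := by field_simp
          rw [hdiv, ← Real.rpow_add h2πt, show -(d:ℝ)/2 + (d:ℝ)/2 = 0 by ring,
            Real.rpow_zero]
  set ct := (2*π*t) ^ (-(d:ℝ)/2) * Real.exp (-(r^2/(8*t))) with hct_def
  have hct_nonneg : 0 ≤ ct := by rw [hct_def]; positivity
  set g := fun y : EuclideanSpace ℝ (Fin d) => heatKernel d t y * ρ ^ (-α)
      + ct * (Metric.ball x ρ).indicator (fun y => ‖y - x‖ ^ (-α)) y with hg_def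
  have hg1_int : Integrable (fun y : EuclideanSpace ℝ (Fin d) => heatKernel d t y * ρ ^ (-α)) :=
    hHK_int.mul_const _
  have hg2_int : Integrable (fun y : EuclideanSpace ℝ (Fin d) =>
      ct * (Metric.ball x ρ).indicator (fun y => ‖y - x‖ ^ (-α)) y) :=
    (riesz_shift_integrable hα0 hαd x hρ).const_mul ct
  have hg_int : Integrable g := hg1_int.add hg2_int
  have h_nonneg : ∀ y : EuclideanSpace ℝ (Fin d), 0 ≤ heatKernel d t y * ‖y - x‖ ^ (-α) :=
    fun y => mul_nonneg (hHK_nonneg y) (Real.rpow_nonneg (norm_nonneg _) _)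
  have h_ptwise : ∀ y : EuclideanSpace ℝ (Fin d),
      heatKernel d t y * ‖y - x‖ ^ (-α) ≤ g y := by
    intro y
    by_cases hy : y ∈ Metric.ball x ρ
    · have h2 : ‖y - x‖ < ρ := by rwa [mem_ball_iff_norm] at hy
      have hyn : ρ ≤ ‖y‖ := by
        have h3 : r ≤ ‖y‖ + ‖y - x‖ := by
          calc r = ‖y - (y - x)‖ := by rw [hr_def]; congr 1; abel
            _ ≤ ‖y‖ + ‖y - x‖ := norm_sub_le _ _
        rw [hρ_def] at h2 ⊢
        linarith
      have harg : r^2/(8*t) ≤ (1/(2*t)) * ‖y‖^2 := by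
        have h4 : ρ^2 ≤ ‖y‖^2 := pow_le_pow_left₀ hρ.le hyn 2
        calc r^2/(8*t) = (1/(2*t)) * ρ^2 := by rw [hρ_def]; ring
          _ ≤ (1/(2*t)) * ‖y‖^2 := by gcongr
      have h1 : heatKernel d t y ≤ ct := by
        rw [hHK y, hct_def]
        have hexp : Real.exp (-(1/(2*t)) * ‖y‖^2) ≤ Real.exp (-(r^2/(8*t))) := by
          rw [Real.exp_le_exp, neg_mul]
          linarith
        exact mul_le_mul_of_nonneg_left hexp (by positivity)
      calc heatKernel d t y * ‖y - x‖ ^ (-α)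
          ≤ ct * ‖y - x‖ ^ (-α) :=
            mul_le_mul_of_nonneg_right h1 (Real.rpow_nonneg (norm_nonneg _) _)
        _ = ct * (Metric.ball x ρ).indicator (fun y => ‖y - x‖ ^ (-α)) y := by
            rw [Set.indicator_of_mem hy]
        _ ≤ g y := le_add_of_nonneg_left
            (mul_nonneg (hHK_nonneg y) (Real.rpow_nonneg hρ.le _))
    · have h5 : ρ ≤ ‖y - x‖ := by rwa [mem_ball_iff_norm, not_lt] at hy
      have h6 : ‖y - x‖ ^ (-α) ≤ ρ ^ (-α) :=
        Real.rpow_le_rpow_of_nonpos hρ h5 (by linarith)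
      calc heatKernel d t y * ‖y - x‖ ^ (-α)
          ≤ heatKernel d t y * ρ ^ (-α) := mul_le_mul_of_nonneg_left h6 (hHK_nonneg y)
        _ ≤ g y := le_add_of_nonneg_right (mul_nonneg hct_nonneg
            (Set.indicator_nonneg (fun z _ => Real.rpow_nonneg (norm_nonneg _) _) y))
  have e1 : ρ ^ (-α) = 2 ^ α * r ^ (-α) := by
    rw [hρ_def, Real.div_rpow hr.le (by norm_num), Real.rpow_neg (by norm_num : (0:ℝ) ≤ 2),
      div_eq_mul_inv, inv_inv, mul_comm]
  have e3 : ρ ^ ((d:ℝ) - α) = r ^ ((d:ℝ) - α) * 2 ^ (α - (d:ℝ)) := by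
    rw [hρ_def, Real.div_rpow hr.le (by norm_num), div_eq_mul_inv,
      ← Real.rpow_neg (by norm_num : (0:ℝ) ≤ 2), neg_sub]
  have hsplit : (2*π*t) ^ (-(d:ℝ)/2) = (2*π) ^ (-(d:ℝ)/2) * t ^ (-(d:ℝ)/2) :=
    Real.mul_rpow (by positivity) ht.le
  have e4 : ct * ρ ^ ((d:ℝ) - α)
      ≤ (2*π) ^ (-(d:ℝ)/2) * (4*(d:ℝ)) ^ ((d:ℝ)/2) * 2 ^ (α - (d:ℝ)) * r ^ (-α) := by
    calc ct * ρ ^ ((d:ℝ) - α)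
        = (2*π) ^ (-(d:ℝ)/2) * (t ^ (-(d:ℝ)/2) * Real.exp (-(r^2/(8*t))))
            * (r ^ ((d:ℝ) - α) * 2 ^ (α - (d:ℝ))) := by
          rw [hct_def, hsplit, e3]; ring
      _ ≤ (2*π) ^ (-(d:ℝ)/2) * ((4*(d:ℝ)) ^ ((d:ℝ)/2) * r ^ (-(d:ℝ)))
            * (r ^ ((d:ℝ) - α) * 2 ^ (α - (d:ℝ))) := by
          refine mul_le_mul_of_nonneg_right
            (mul_le_mul_of_nonneg_left (aux_t_bound d hr ht) (by positivity)) (by positivity)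
      _ = (2*π) ^ (-(d:ℝ)/2) * (4*(d:ℝ)) ^ ((d:ℝ)/2) * 2 ^ (α - (d:ℝ))
            * (r ^ (-(d:ℝ)) * r ^ ((d:ℝ) - α)) := by ring
      _ = (2*π) ^ (-(d:ℝ)/2) * (4*(d:ℝ)) ^ ((d:ℝ)/2) * 2 ^ (α - (d:ℝ)) * r ^ (-α) := by
          rw [← Real.rpow_add hr]
          congr 1
          ring
  calc ∫ y, heatKernel d t y * ‖y - x‖ ^ (-α)
      ≤ ∫ y, g y := integral_mono_of_nonneg (Eventually.of_forall h_nonneg) hg_int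
        (Eventually.of_forall h_ptwise)
    _ = (∫ y, heatKernel d t y) * ρ ^ (-α)
        + ct * ∫ y, (Metric.ball x ρ).indicator (fun y => ‖y - x‖ ^ (-α)) y := by
        rw [hg_def, integral_add hg1_int hg2_int, integral_mul_const, integral_const_mul]
    _ = ρ ^ (-α) + ct * (ρ ^ ((d:ℝ) - α) * J) := by
        rw [hHK_integral, one_mul, riesz_shift_integral, riesz_scaling hρ]
    _ = 2 ^ α * r ^ (-α) + (ct * ρ ^ ((d:ℝ) - α)) * J := by rw [e1]; ring
    _ ≤ 2 ^ α * r ^ (-α)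
        + ((2*π) ^ (-(d:ℝ)/2) * (4*(d:ℝ)) ^ ((d:ℝ)/2) * 2 ^ (α - (d:ℝ)) * r ^ (-α)) * J :=
        add_le_add_right (mul_le_mul_of_nonneg_right e4 hJ) _
    _ = (2 ^ α + (2*π) ^ (-(d:ℝ)/2) * (4*(d:ℝ)) ^ ((d:ℝ)/2) * 2 ^ (α - (d:ℝ)) * J) * r ^ (-α) := by
        ring
end

section
/- Let d ≥ 1. There exists a constant C = C(d) > 0 such that for every nonzero x ∈ ℝ^d and every t > 0, ∫_{ℝ^d} p_t(y) log⁺(1/|y - x|) dy ≤ C (1 + log⁺(1/|x|)). -/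
open MeasureTheory Real Filter Topology

open Metric Set ENNReal

/-- Dyadic localization of a number in `(0,1)`. -/
lemma hk_dyadic {u : ℝ} (h0 : 0 < u) (h1 : u < 1) :
    ∃ k : ℕ, (1 / 2 : ℝ) ^ (k + 1) < u ∧ u ≤ (1 / 2 : ℝ) ^ k := by
  have hu1 : (1 : ℝ) < 1 / u := one_lt_one_div h0 h1
  set n := ⌊1 / u⌋₊ with hn
  have hn1 : 1 ≤ n := Nat.le_floor (by exact_mod_cast hu1.le)
  have hn0 : n ≠ 0 := by omega
  set k := Nat.log 2 n with hk
  have hp1 : (0:ℝ) < 2 ^ (k + 1) := by positivity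
  have hp0 : (0:ℝ) < 2 ^ k := by positivity
  refine ⟨k, ?_, ?_⟩
  · have h2 : (1 : ℝ) / u < 2 ^ (k + 1) := by
      have hlt : n < 2 ^ (k + 1) := Nat.lt_pow_succ_log_self one_lt_two n
      have h3 : (1 : ℝ) / u < n + 1 := Nat.lt_floor_add_one _
      have h4 : (n : ℝ) + 1 ≤ 2 ^ (k + 1) := by exact_mod_cast hlt
      linarith
    have hmul : 1 < u * 2 ^ (k + 1) := by
      have := mul_lt_mul_of_pos_left h2 h0
      rwa [mul_one_div, div_self h0.ne'] at this
    calc (1 / 2 : ℝ) ^ (k + 1) = 1 * (2 ^ (k + 1))⁻¹ := by rw [one_mul, one_div_pow, one_div]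
      _ < u * 2 ^ (k + 1) * (2 ^ (k + 1))⁻¹ := by
          apply mul_lt_mul_of_pos_right _ (by positivity)
          simpa using hmul
      _ = u := by field_simp
  · have h2 : (2 : ℝ) ^ k ≤ 1 / u := by
      have h3 : (2 : ℝ) ^ k ≤ (n : ℝ) := by exact_mod_cast Nat.pow_log_le_self 2 hn0
      have h4 : (n : ℝ) ≤ 1 / u := Nat.floor_le (by positivity)
      linarith
    have hmul : u * 2 ^ k ≤ 1 := by
      have := mul_le_mul_of_nonneg_left h2 h0.le
      rwa [mul_one_div, div_self h0.ne'] at this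
    calc u = u * 2 ^ k * (2 ^ k)⁻¹ := by field_simp
      _ ≤ 1 * (2 ^ k)⁻¹ := by
          apply mul_le_mul_of_nonneg_right hmul (by positivity)
      _ = (1 / 2 : ℝ) ^ k := by rw [one_mul, one_div_pow, one_div]

/-- Real series bound used in the dyadic estimate. -/
lemma hk_sum_bound {ρ : ℝ} (d : ℕ) (hd : 1 ≤ d) (h0 : 0 < ρ) (h1 : ρ ≤ 1) :
    Summable (fun k : ℕ => (((k : ℝ) + 1) * Real.log 2 + Real.log (1 / ρ)) *
      (ρ * (1 / 2 : ℝ) ^ k) ^ d) ∧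
    (∑' k : ℕ, (((k : ℝ) + 1) * Real.log 2 + Real.log (1 / ρ)) * (ρ * (1 / 2 : ℝ) ^ k) ^ d)
      ≤ ρ ^ d * (4 * Real.log 2 + 2 * Real.log (1 / ρ)) := by
  set L := Real.log (1 / ρ) with hL
  have hL0 : 0 ≤ L := Real.log_nonneg (one_le_one_div h0 h1)
  have hlog2 : 0 ≤ Real.log 2 := Real.log_nonneg one_le_two
  set q : ℝ := 1 / 2 with hq
  have hq0 : (0:ℝ) ≤ q := by norm_num [hq]
  have hq1 : q < 1 := by norm_num [hq]
  have hnq : ‖q‖ < 1 := by rw [hq, Real.norm_eq_abs, abs_of_nonneg] <;> norm_num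
  -- summability of the majorant
  have s1 : Summable (fun k : ℕ => (k : ℝ) * q ^ k) := by
    simpa using summable_pow_mul_geometric_of_norm_lt_one 1 hnq
  have s2 : Summable (fun k : ℕ => q ^ k) := summable_geometric_of_lt_one hq0 hq1
  have s3 : Summable (fun k : ℕ => ((k : ℝ) + 1) * q ^ k) := by
    have := s1.add s2
    refine this.congr fun k => ?_
    ring
  have sc : Summable (fun k : ℕ => ρ ^ d * ((((k : ℝ) + 1) * Real.log 2 + L) * q ^ k)) := by
    apply Summable.mul_left
    have := (s3.mul_left (Real.log 2)).add (s2.mul_left L)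
    refine this.congr fun k => ?_
    ring
  -- termwise bound
  have hterm : ∀ k : ℕ, (((k : ℝ) + 1) * Real.log 2 + L) * (ρ * q ^ k) ^ d
      ≤ ρ ^ d * ((((k : ℝ) + 1) * Real.log 2 + L) * q ^ k) := by
    intro k
    have hcoef : 0 ≤ ((k : ℝ) + 1) * Real.log 2 + L := by positivity
    have hqd : (q ^ k) ^ d ≤ q ^ k := by
      have h1' : (q ^ k) ^ d ≤ (q ^ k) ^ 1 := by
        apply pow_le_pow_of_le_one (by positivity) _ hd
        exact pow_le_one₀ hq0 hq1.le
      simpa using h1'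
    have : (ρ * q ^ k) ^ d ≤ ρ ^ d * q ^ k := by
      rw [mul_pow]
      exact mul_le_mul_of_nonneg_left hqd (by positivity)
    calc (((k : ℝ) + 1) * Real.log 2 + L) * (ρ * q ^ k) ^ d
        ≤ (((k : ℝ) + 1) * Real.log 2 + L) * (ρ ^ d * q ^ k) :=
          mul_le_mul_of_nonneg_left this hcoef
      _ = ρ ^ d * ((((k : ℝ) + 1) * Real.log 2 + L) * q ^ k) := by ring
  have hsf : Summable (fun k : ℕ => (((k : ℝ) + 1) * Real.log 2 + L) * (ρ * q ^ k) ^ d) := by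
    apply Summable.of_nonneg_of_le (fun k => by positivity) hterm sc
  refine ⟨hsf, ?_⟩
  have htsum_le := Summable.tsum_le_tsum hterm hsf sc
  refine htsum_le.trans ?_
  rw [tsum_mul_left]
  apply mul_le_mul_of_nonneg_left _ (by positivity)
  -- compute the sum
  have e1 : (∑' k : ℕ, (k : ℝ) * q ^ k) = q / (1 - q) ^ 2 :=
    tsum_coe_mul_geometric_of_norm_lt_one hnq
  have e2 : (∑' k : ℕ, q ^ k) = (1 - q)⁻¹ := tsum_geometric_of_lt_one hq0 hq1
  have e3 : (∑' k : ℕ, (((k : ℝ) + 1) * Real.log 2 + L) * q ^ k)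
      = Real.log 2 * (q / (1 - q) ^ 2 + (1 - q)⁻¹) + L * (1 - q)⁻¹ := by
    have h := ((s1.add s2).mul_left (Real.log 2)).add (s2.mul_left L)
    have : (∑' k : ℕ, (((k : ℝ) + 1) * Real.log 2 + L) * q ^ k)
        = ∑' k : ℕ, (Real.log 2 * ((k : ℝ) * q ^ k + q ^ k) + L * q ^ k) := by
      congr 1; funext k; ring
    rw [this, Summable.tsum_add ((s1.add s2).mul_left (Real.log 2)) (s2.mul_left L),
      tsum_mul_left, tsum_mul_left, Summable.tsum_add s1 s2, e1, e2]
  rw [e3]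
  have : q / (1 - q) ^ 2 + (1 - q)⁻¹ = 4 := by norm_num [hq]
  rw [this]
  have : (1 - q)⁻¹ = 2 := by norm_num [hq]
  rw [this]
  linarith

/-- The key dyadic estimate for the integral of `log⁺(1/‖z‖)` over a small ball. -/
lemma hk_key (d : ℕ) (hd : 1 ≤ d) {ρ : ℝ} (h0 : 0 < ρ) (h1 : ρ ≤ 1) :
    (∫⁻ z in Metric.ball (0 : EuclideanSpace ℝ (Fin d)) ρ,
        ENNReal.ofReal (max (Real.log (1 / ‖z‖)) 0))
      ≤ ENNReal.ofReal ((volume (Metric.ball (0 : EuclideanSpace ℝ (Fin d)) 1)).toReal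
          * (ρ ^ d * (4 * Real.log 2 + 2 * Real.log (1 / ρ)))) := by
  set E := EuclideanSpace ℝ (Fin d)
  set B := volume (Metric.ball (0 : E) 1) with hB
  have hBfin : B ≠ ⊤ := measure_ball_lt_top.ne
  have hBV : B = ENNReal.ofReal B.toReal := (ENNReal.ofReal_toReal hBfin).symm
  set L := Real.log (1 / ρ) with hLdef
  have hL0 : 0 ≤ L := Real.log_nonneg (one_le_one_div h0 h1)
  have hlog2 : 0 ≤ Real.log 2 := Real.log_nonneg one_le_two
  set S : ℕ → Set E := fun k => {z : E | ρ * (1/2:ℝ) ^ (k+1) < ‖z‖ ∧ ‖z‖ ≤ ρ * (1/2:ℝ) ^ k}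
    with hS
  have cover : Metric.ball (0 : E) ρ ⊆ {0} ∪ ⋃ k, S k := by
    intro z hz
    rcases eq_or_ne z 0 with h | h
    · exact Or.inl (by simp [h])
    · right
      have hz0 : 0 < ‖z‖ := norm_pos_iff.mpr h
      have hzρ : ‖z‖ < ρ := mem_ball_zero_iff.mp hz
      have hu0 : 0 < ‖z‖ / ρ := by positivity
      have hu1 : ‖z‖ / ρ < 1 := (div_lt_one h0).mpr hzρ
      obtain ⟨k, hk1, hk2⟩ := hk_dyadic hu0 hu1
      refine Set.mem_iUnion.mpr ⟨k, ?_, ?_⟩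
      · have := (lt_div_iff₀ h0).mp hk1
        linarith
      · have := (div_le_iff₀ h0).mp hk2
        linarith
  calc (∫⁻ z in Metric.ball (0 : E) ρ, ENNReal.ofReal (max (Real.log (1 / ‖z‖)) 0))
      ≤ ∫⁻ z in ({0} ∪ ⋃ k, S k : Set E), ENNReal.ofReal (max (Real.log (1 / ‖z‖)) 0) :=
        lintegral_mono_set cover
    _ ≤ (∫⁻ z in ({0} : Set E), ENNReal.ofReal (max (Real.log (1 / ‖z‖)) 0))
        + ∫⁻ z in (⋃ k, S k), ENNReal.ofReal (max (Real.log (1 / ‖z‖)) 0) :=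
        lintegral_union_le _ _ _
    _ = ∫⁻ z in (⋃ k, S k), ENNReal.ofReal (max (Real.log (1 / ‖z‖)) 0) := by
        rw [setLIntegral_measure_zero, zero_add]
        have h00 : ({0} : Set E) = Metric.closedBall (0 : E) 0 := by
          rw [Metric.closedBall_zero]
        rw [h00, Measure.addHaar_closedBall _ _ le_rfl, finrank_euclideanSpace_fin]
        simp [zero_pow (by omega : d ≠ 0)]
    _ ≤ ∑' k, ∫⁻ z in S k, ENNReal.ofReal (max (Real.log (1 / ‖z‖)) 0) :=
        lintegral_iUnion_le _ _
    _ ≤ ∑' k : ℕ, ENNReal.ofReal ((((k:ℝ)+1) * Real.log 2 + L) * (ρ * (1/2:ℝ)^k) ^ d) * B := by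
        apply ENNReal.tsum_le_tsum
        intro k
        have hsub : S k ⊆ Metric.closedBall (0:E) (ρ * (1/2:ℝ)^k) := by
          intro z hz
          exact mem_closedBall_zero_iff.mpr hz.2
        have hvol : volume (S k) ≤ ENNReal.ofReal ((ρ * (1/2:ℝ)^k) ^ d) * B := by
          refine (measure_mono hsub).trans ?_
          rw [Measure.addHaar_closedBall _ _ (by positivity), finrank_euclideanSpace_fin]
        have hpt : ∀ z ∈ S k, ENNReal.ofReal (max (Real.log (1 / ‖z‖)) 0)
            ≤ ENNReal.ofReal (((k:ℝ)+1) * Real.log 2 + L) := by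
          intro z hz
          apply ENNReal.ofReal_le_ofReal
          have hz0 : (0:ℝ) < ρ * (1/2:ℝ)^(k+1) := by positivity
          have hzpos : 0 < ‖z‖ := lt_trans hz0 hz.1
          refine max_le ?_ (by positivity)
          have hmono : Real.log (1 / ‖z‖) ≤ Real.log (1 / (ρ * (1/2:ℝ)^(k+1))) := by
            apply Real.log_le_log (by positivity)
            exact one_div_le_one_div_of_le hz0 hz.1.le
          refine hmono.trans_eq ?_
          have harg : 1 / (ρ * (1/2:ℝ)^(k+1)) = (1/ρ) * 2^(k+1) := by
            rw [one_div_pow]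
            field_simp
          rw [harg, Real.log_mul (by positivity) (by positivity), Real.log_pow]
          push_cast
          ring
        calc (∫⁻ z in S k, ENNReal.ofReal (max (Real.log (1 / ‖z‖)) 0))
            ≤ ∫⁻ _ in S k, ENNReal.ofReal (((k:ℝ)+1) * Real.log 2 + L) :=
              setLIntegral_mono measurable_const hpt
          _ = ENNReal.ofReal (((k:ℝ)+1) * Real.log 2 + L) * volume (S k) :=
              setLIntegral_const _ _
          _ ≤ ENNReal.ofReal (((k:ℝ)+1) * Real.log 2 + L)
              * (ENNReal.ofReal ((ρ * (1/2:ℝ)^k) ^ d) * B) := by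
              exact mul_le_mul_right hvol _
          _ = ENNReal.ofReal ((((k:ℝ)+1) * Real.log 2 + L) * (ρ * (1/2:ℝ)^k) ^ d) * B := by
              rw [← mul_assoc, ← ENNReal.ofReal_mul (by positivity)]
    _ ≤ ENNReal.ofReal (B.toReal * (ρ ^ d * (4 * Real.log 2 + 2 * L))) := by
        rw [ENNReal.tsum_mul_right]
        obtain ⟨hsf, hsum⟩ := hk_sum_bound d hd h0 h1
        rw [← ENNReal.ofReal_tsum_of_nonneg (fun k => by positivity) hsf]
        calc ENNReal.ofReal
              (∑' k : ℕ, (((k:ℝ)+1) * Real.log 2 + L) * (ρ * (1/2:ℝ)^k) ^ d) * B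
            ≤ ENNReal.ofReal (ρ ^ d * (4 * Real.log 2 + 2 * L)) * B :=
              mul_le_mul_left (ENNReal.ofReal_le_ofReal hsum) B
          _ = ENNReal.ofReal (ρ ^ d * (4 * Real.log 2 + 2 * L))
              * ENNReal.ofReal B.toReal := by rw [← hBV]
          _ = ENNReal.ofReal ((ρ ^ d * (4 * Real.log 2 + 2 * L)) * B.toReal) :=
              (ENNReal.ofReal_mul (by positivity)).symm
          _ = ENNReal.ofReal (B.toReal * (ρ ^ d * (4 * Real.log 2 + 2 * L))) := by
              rw [mul_comm]

/-- Bound on the prefactor: `(2πt)^{-d/2} e^{-R²/(8t)} ≤ 2^d (1 + d!) / R^d`. -/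
lemma hk_M_bound (d : ℕ) {t R : ℝ} (ht : 0 < t) (hR : 0 < R) :
    (2 * Real.pi * t) ^ (-(d : ℝ) / 2) * Real.exp (-(R ^ 2 / (8 * t)))
      ≤ (2 ^ d * (1 + (d.factorial : ℝ))) / R ^ d := by
  set w : ℝ := R ^ 2 / (8 * t) with hw
  have hw0 : 0 < w := by positivity
  have hπ : (2:ℝ) ≤ Real.pi := by linarith [Real.pi_gt_three]
  have h2πt : (0:ℝ) < 2 * Real.pi * t := by positivity
  -- Step 1 : (2πt)^(-d/2) ≤ (2w/R²)^(d/2)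
  have hstep1 : (2 * Real.pi * t) ^ (-(d : ℝ) / 2) ≤ (2 * w / R ^ 2) ^ ((d : ℝ) / 2) := by
    have hinv : (2 * Real.pi * t)⁻¹ ≤ 2 * w / R ^ 2 := by
      have harg : 2 * w / R ^ 2 = 1 / (4 * t) := by
        rw [hw]; field_simp; ring
      rw [harg, one_div]
      apply inv_anti₀ (by positivity)
      nlinarith
    calc (2 * Real.pi * t) ^ (-(d : ℝ) / 2)
        = ((2 * Real.pi * t)⁻¹) ^ ((d : ℝ) / 2) := by
          rw [neg_div, Real.rpow_neg h2πt.le, ← Real.inv_rpow h2πt.le]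
      _ ≤ (2 * w / R ^ 2) ^ ((d : ℝ) / 2) :=
          Real.rpow_le_rpow (by positivity) hinv (by positivity)
  have hR2 : ((R ^ 2 : ℝ)) ^ ((d : ℝ) / 2) = R ^ d := by
    rw [← Real.rpow_natCast R d, ← Real.rpow_natCast R 2, ← Real.rpow_mul hR.le]
    congr 1
    push_cast
    ring
  have hstep2 : (2 * w / R ^ 2) ^ ((d : ℝ) / 2)
      = (2 * w) ^ ((d : ℝ) / 2) / R ^ d := by
    rw [Real.div_rpow (by positivity) (by positivity), hR2]
  have h2w : (2 * w) ^ ((d : ℝ) / 2) = 2 ^ ((d : ℝ) / 2) * w ^ ((d : ℝ) / 2) :=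
    Real.mul_rpow (by norm_num) hw0.le
  have hd2 : ((d : ℝ) / 2) ≤ (d : ℝ) := by
    have : (0:ℝ) ≤ (d : ℝ) := Nat.cast_nonneg d
    linarith
  have h2le : (2:ℝ) ^ ((d : ℝ) / 2) ≤ 2 ^ d := by
    calc (2:ℝ) ^ ((d : ℝ) / 2) ≤ 2 ^ (d : ℝ) :=
          Real.rpow_le_rpow_of_exponent_le one_le_two hd2
      _ = 2 ^ d := Real.rpow_natCast 2 d
  have hwle : w ^ ((d : ℝ) / 2) ≤ 1 + w ^ d := by
    rcases le_or_gt w 1 with h | h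
    · have h1 : w ^ ((d : ℝ) / 2) ≤ 1 := Real.rpow_le_one hw0.le h (by positivity)
      have h2 : (0:ℝ) ≤ w ^ d := by positivity
      linarith
    · have h1 : w ^ ((d : ℝ) / 2) ≤ w ^ (d : ℝ) :=
        Real.rpow_le_rpow_of_exponent_le h.le hd2
      rw [Real.rpow_natCast] at h1
      linarith
  have hfact : w ^ d * Real.exp (-w) ≤ (d.factorial : ℝ) := by
    have h1 : w ^ d / (d.factorial : ℝ) ≤ Real.exp w := Real.pow_div_factorial_le_exp w hw0.le d
    have h3 : (0:ℝ) < Real.exp w := Real.exp_pos w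
    have h4 : w ^ d ≤ Real.exp w * (d.factorial : ℝ) := by
      have := (div_le_iff₀ (by positivity : (0:ℝ) < (d.factorial : ℝ))).mp h1
      linarith
    rw [Real.exp_neg]
    calc w ^ d * (Real.exp w)⁻¹ ≤ (Real.exp w * (d.factorial : ℝ)) * (Real.exp w)⁻¹ :=
          mul_le_mul_of_nonneg_right h4 (by positivity)
      _ = (d.factorial : ℝ) * (Real.exp w * (Real.exp w)⁻¹) := by ring
      _ = (d.factorial : ℝ) := by rw [mul_inv_cancel₀ h3.ne', mul_one]
  have hexp1 : Real.exp (-w) ≤ 1 := by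
    calc Real.exp (-w) ≤ Real.exp 0 := Real.exp_le_exp.mpr (by linarith)
      _ = 1 := Real.exp_zero
  have hnum : 2 ^ ((d : ℝ) / 2) * (w ^ ((d : ℝ) / 2) * Real.exp (-w))
      ≤ 2 ^ d * (1 + (d.factorial : ℝ)) := by
    have e1 : w ^ ((d : ℝ) / 2) * Real.exp (-w) ≤ (1 + w ^ d) * Real.exp (-w) :=
      mul_le_mul_of_nonneg_right hwle (Real.exp_pos _).le
    have e3 : (1 + w ^ d) * Real.exp (-w) ≤ 1 + (d.factorial : ℝ) := by
      have : (1 + w ^ d) * Real.exp (-w) = Real.exp (-w) + w ^ d * Real.exp (-w) := by ring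
      rw [this]
      exact add_le_add hexp1 hfact
    exact mul_le_mul h2le (e1.trans e3) (by positivity) (by positivity)
  calc (2 * Real.pi * t) ^ (-(d : ℝ) / 2) * Real.exp (-(R ^ 2 / (8 * t)))
      = (2 * Real.pi * t) ^ (-(d : ℝ) / 2) * Real.exp (-w) := by rw [hw]
    _ ≤ ((2 * w) ^ ((d : ℝ) / 2) / R ^ d) * Real.exp (-w) :=
        mul_le_mul_of_nonneg_right (hstep1.trans_eq hstep2) (Real.exp_pos _).le
    _ = (2 ^ ((d : ℝ) / 2) * (w ^ ((d : ℝ) / 2) * Real.exp (-w))) / R ^ d := by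
        rw [h2w]; ring
    _ ≤ (2 ^ d * (1 + (d.factorial : ℝ))) / R ^ d := by gcongr

set_option maxHeartbeats 1000000 in
theorem heat_kernel_logplus_bound (d : ℕ) (hd : 1 ≤ d) :
    ∃ C > 0, ∀ x : EuclideanSpace ℝ (Fin d), x ≠ 0 → ∀ t : ℝ, 0 < t →
      (∫ y, heatKernel d t y * max (Real.log (1 / ‖y - x‖)) 0) ≤
        C * (1 + max (Real.log (1 / ‖x‖)) 0) := by
  classical
  set V : ℝ := (volume (Metric.ball (0 : (EuclideanSpace ℝ (Fin d))) 1)).toReal with hV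
  have hV0 : 0 ≤ V := ENNReal.toReal_nonneg
  set K : ℝ := 2 ^ d * (1 + (d.factorial : ℝ)) with hKdef
  have hK0 : 0 < K := by positivity
  refine ⟨1 + 6 * K * V, by nlinarith [mul_nonneg hK0.le hV0], ?_⟩
  intro x hx t ht
  set L := max (Real.log (1 / ‖x‖)) 0 with hL
  have hL0 : 0 ≤ L := le_max_right _ _
  have hR : 0 < ‖x‖ := norm_pos_iff.mpr hx
  set r' : ℝ := min (‖x‖ / 2) 1 with hr'
  have hr'0 : 0 < r' := lt_min (by positivity) one_pos
  have hr'1 : r' ≤ 1 := min_le_right _ _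
  have hr'r : r' ≤ ‖x‖ / 2 := min_le_left _ _
  have h2πt : (0:ℝ) < 2 * Real.pi * t := by positivity
  set M : ℝ := (2 * Real.pi * t) ^ (-(d : ℝ) / 2) * Real.exp (-(‖x‖ ^ 2 / (8 * t))) with hM
  have hM0 : 0 ≤ M := by positivity
  set pt : (EuclideanSpace ℝ (Fin d)) → ℝ := heatKernel d t with hptdef
  have hpt_cont : Continuous pt := by
    rw [hptdef]; unfold heatKernel; fun_prop
  have hpt_nonneg : ∀ y, 0 ≤ pt y := fun y => by
    rw [hptdef]; unfold heatKernel; positivity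
  have hlog2 : (0:ℝ) ≤ Real.log 2 := Real.log_nonneg one_le_two
  have hlog2one : Real.log 2 ≤ 1 := by
    have := Real.log_le_sub_one_of_pos (by norm_num : (0:ℝ) < 2)
    linarith
  have hlogL : 0 ≤ Real.log 2 + L := add_nonneg hlog2 hL0
  have hKV : 0 ≤ K * V := mul_nonneg hK0.le hV0
  have h1L : (0:ℝ) ≤ 1 + L := by linarith
  have hCpos : 0 ≤ (1 + 6 * K * V) * (1 + L) := by nlinarith
  -- integrability and total mass of the heat kernel
  have hb : (0:ℝ) < (2 * t)⁻¹ := by positivity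
  have hgauss_int : Integrable (fun y : (EuclideanSpace ℝ (Fin d)) => Real.exp (-((2 * t)⁻¹ * ‖y‖ ^ 2))) := by
    have h := (GaussianFourier.integrable_cexp_neg_mul_sq_norm_add (V := (EuclideanSpace ℝ (Fin d)))
      (b := (((2 * t)⁻¹ : ℝ) : ℂ)) (by simpa using hb) 0 (0 : (EuclideanSpace ℝ (Fin d)))).norm
    refine h.congr (Filter.Eventually.of_forall fun v => ?_)
    have hz : -((((2 * t)⁻¹ : ℝ)) : ℂ) * (‖v‖ : ℂ) ^ 2
        + (0 : ℂ) * ((inner ℝ (0 : (EuclideanSpace ℝ (Fin d))) v : ℝ) : ℂ)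
        = (((-((2 * t)⁻¹ * ‖v‖ ^ 2)) : ℝ) : ℂ) := by
      push_cast; ring
    beta_reduce
    rw [hz, Complex.norm_exp, Complex.ofReal_re]
  have hpt_int : Integrable pt := by
    have hpt_eq : pt = fun y : (EuclideanSpace ℝ (Fin d)) =>
        (2 * Real.pi * t) ^ (-(d : ℝ) / 2) * Real.exp (-((2 * t)⁻¹ * ‖y‖ ^ 2)) := by
      funext y
      rw [hptdef]; unfold heatKernel
      congr 1
      congr 1
      ring
    rw [hpt_eq]
    exact hgauss_int.const_mul _
  have hpt_integral : ∫ y, pt y = 1 := by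
    have hval := GaussianFourier.integral_rexp_neg_mul_sq_norm (V := (EuclideanSpace ℝ (Fin d))) hb
    have hpt_eq : ∀ y : (EuclideanSpace ℝ (Fin d)), pt y
        = (2 * Real.pi * t) ^ (-(d : ℝ) / 2) * Real.exp (-((2 * t)⁻¹) * ‖y‖ ^ 2) := by
      intro y
      rw [hptdef]; unfold heatKernel
      congr 1
      congr 1
      ring
    calc ∫ y, pt y
        = ∫ y : (EuclideanSpace ℝ (Fin d)), (2 * Real.pi * t) ^ (-(d : ℝ) / 2)
            * Real.exp (-((2 * t)⁻¹) * ‖y‖ ^ 2) := by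
          congr 1; funext y; exact hpt_eq y
      _ = (2 * Real.pi * t) ^ (-(d : ℝ) / 2)
            * ∫ y : (EuclideanSpace ℝ (Fin d)), Real.exp (-((2 * t)⁻¹) * ‖y‖ ^ 2) := integral_const_mul _ _
      _ = (2 * Real.pi * t) ^ (-(d : ℝ) / 2)
            * (Real.pi / (2 * t)⁻¹) ^ ((Module.finrank ℝ (EuclideanSpace ℝ (Fin d)) : ℝ) / 2) := by rw [hval]
      _ = (2 * Real.pi * t) ^ (-(d : ℝ) / 2) * (2 * Real.pi * t) ^ ((d : ℝ) / 2) := by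
          congr 2
          · rw [div_eq_mul_inv, inv_inv]; ring
          · rw [show Module.finrank ℝ (EuclideanSpace ℝ (Fin d)) = d from finrank_euclideanSpace_fin]
      _ = 1 := by
          rw [← Real.rpow_add h2πt, show (-(d:ℝ)/2 + (d:ℝ)/2) = 0 by ring,
            Real.rpow_zero]
  -- pointwise bounds
  have key_pt : ∀ y : (EuclideanSpace ℝ (Fin d)), y ∈ Metric.ball x r' → pt y ≤ M := by
    intro y hy
    have h1 : ‖y - x‖ < r' := by rwa [mem_ball_iff_norm] at hy
    have h2 : ‖x‖ / 2 < ‖y‖ := by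
      have h3 : ‖x‖ - ‖y‖ ≤ ‖x - y‖ := norm_sub_norm_le x y
      have h4 : ‖x - y‖ = ‖y - x‖ := norm_sub_rev x y
      have h5 : ‖y - x‖ < ‖x‖ / 2 := h1.trans_le hr'r
      linarith
    rw [hptdef, hM]; unfold heatKernel
    apply mul_le_mul_of_nonneg_left _ (by positivity)
    apply Real.exp_le_exp.mpr
    have h5 : ‖x‖ ^ 2 / 4 ≤ ‖y‖ ^ 2 := by nlinarith [norm_nonneg y, hR]
    have h6 : ‖x‖ ^ 2 / (8 * t) ≤ ‖y‖ ^ 2 / (2 * t) := by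
      rw [div_le_div_iff₀ (by positivity) (by positivity)]
      nlinarith [ht]
    have h7 : -‖y‖ ^ 2 / (2 * t) = -(‖y‖ ^ 2 / (2 * t)) := by ring
    rw [h7]
    linarith
  have key_far : ∀ y : (EuclideanSpace ℝ (Fin d)), y ∉ Metric.ball x r' →
      max (Real.log (1 / ‖y - x‖)) 0 ≤ Real.log 2 + L := by
    intro y hy
    have h1 : r' ≤ ‖y - x‖ := by
      rw [mem_ball_iff_norm, not_lt] at hy; exact hy
    rcases le_or_gt 1 ‖y - x‖ with h | h
    · refine max_le ?_ hlogL
      have hpos : (0:ℝ) < ‖y - x‖ := by linarith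
      have : Real.log (1 / ‖y - x‖) ≤ 0 :=
        Real.log_nonpos (by positivity) ((div_le_one hpos).mpr h)
      linarith
    · have hxr : ‖x‖ / 2 ≤ ‖y - x‖ := by
        rcases le_or_gt (‖x‖ / 2) 1 with hc | hc
        · have hre : r' = ‖x‖ / 2 := min_eq_left hc
          linarith [hre ▸ h1]
        · have hre : r' = 1 := min_eq_right hc.le
          linarith [hre ▸ h1]
      refine max_le ?_ hlogL
      have h2 : Real.log (1 / ‖y - x‖) ≤ Real.log (1 / (‖x‖ / 2)) := by
        apply Real.log_le_log (one_div_pos.mpr (by linarith))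
        exact one_div_le_one_div_of_le (by positivity) hxr
      have h3 : (1:ℝ) / (‖x‖ / 2) = 2 * (1 / ‖x‖) := by field_simp
      rw [h3, Real.log_mul (by norm_num) (by positivity)] at h2
      have h4 : Real.log (1 / ‖x‖) ≤ L := le_max_left _ _
      linarith
  -- measurability
  have hPm : Measurable fun y : (EuclideanSpace ℝ (Fin d)) => max (Real.log (1 / ‖y - x‖)) 0 :=
    (Real.measurable_log.comp
      (measurable_const.div ((measurable_id.sub measurable_const).norm))).max measurable_const
  have hQm : Measurable fun z : (EuclideanSpace ℝ (Fin d)) => ENNReal.ofReal (max (Real.log (1 / ‖z‖)) 0) :=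
    ((Real.measurable_log.comp (measurable_const.div measurable_norm)).max
      measurable_const).ennreal_ofReal
  have hFnn : (0 : (EuclideanSpace ℝ (Fin d)) → ℝ) ≤ᵐ[volume] fun y => pt y * max (Real.log (1 / ‖y - x‖)) 0 :=
    Filter.Eventually.of_forall fun y =>
      mul_nonneg (hpt_nonneg y) (le_max_right _ _)
  have hFm : AEStronglyMeasurable (fun y : (EuclideanSpace ℝ (Fin d)) => pt y * max (Real.log (1 / ‖y - x‖)) 0)
      volume := (hpt_cont.measurable.mul hPm).aestronglyMeasurable
  rw [integral_eq_lintegral_of_nonneg_ae hFnn hFm]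
  -- the main lintegral estimate
  have hlogr' : 0 ≤ Real.log (1 / r') := Real.log_nonneg (one_le_one_div hr'0 hr'1)
  have hlint : (∫⁻ y, ENNReal.ofReal (pt y * max (Real.log (1 / ‖y - x‖)) 0))
      ≤ ENNReal.ofReal ((1 + 6 * K * V) * (1 + L)) := by
    have step1 : (∫⁻ y, ENNReal.ofReal (pt y * max (Real.log (1 / ‖y - x‖)) 0))
        ≤ ∫⁻ y, (ENNReal.ofReal ((Real.log 2 + L) * pt y)
            + ENNReal.ofReal M * (Metric.ball x r').indicator
              (fun y => ENNReal.ofReal (max (Real.log (1 / ‖y - x‖)) 0)) y) := by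
      apply lintegral_mono
      intro y
      beta_reduce
      by_cases hy : y ∈ Metric.ball x r'
      · rw [Set.indicator_of_mem hy]
        have h1 : pt y * max (Real.log (1 / ‖y - x‖)) 0
            ≤ M * max (Real.log (1 / ‖y - x‖)) 0 :=
          mul_le_mul_of_nonneg_right (key_pt y hy) (le_max_right _ _)
        calc ENNReal.ofReal (pt y * max (Real.log (1 / ‖y - x‖)) 0)
            ≤ ENNReal.ofReal (M * max (Real.log (1 / ‖y - x‖)) 0) :=
              ENNReal.ofReal_le_ofReal h1
          _ = ENNReal.ofReal M * ENNReal.ofReal (max (Real.log (1 / ‖y - x‖)) 0) :=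
              ENNReal.ofReal_mul hM0
          _ ≤ _ := le_add_self
      · rw [Set.indicator_of_notMem hy, mul_zero, add_zero]
        apply ENNReal.ofReal_le_ofReal
        calc pt y * max (Real.log (1 / ‖y - x‖)) 0
            ≤ pt y * (Real.log 2 + L) :=
              mul_le_mul_of_nonneg_left (key_far y hy) (hpt_nonneg y)
          _ = (Real.log 2 + L) * pt y := mul_comm _ _
    have hmeas2 : Measurable fun y : (EuclideanSpace ℝ (Fin d)) => (Metric.ball x r').indicator
        (fun y => ENNReal.ofReal (max (Real.log (1 / ‖y - x‖)) 0)) y :=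
      (hPm.ennreal_ofReal).indicator measurableSet_ball
    have step2 : (∫⁻ y, (ENNReal.ofReal ((Real.log 2 + L) * pt y)
            + ENNReal.ofReal M * (Metric.ball x r').indicator
              (fun y => ENNReal.ofReal (max (Real.log (1 / ‖y - x‖)) 0)) y))
        = (∫⁻ y, ENNReal.ofReal ((Real.log 2 + L) * pt y))
          + ENNReal.ofReal M * ∫⁻ y, (Metric.ball x r').indicator
              (fun y => ENNReal.ofReal (max (Real.log (1 / ‖y - x‖)) 0)) y := by
      rw [lintegral_add_left (by
        exact ((hpt_cont.measurable.const_mul _).ennreal_ofReal)),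
        lintegral_const_mul _ hmeas2]
    have hG1 : (∫⁻ y, ENNReal.ofReal ((Real.log 2 + L) * pt y))
        = ENNReal.ofReal (Real.log 2 + L) := by
      have heq : ∀ y : (EuclideanSpace ℝ (Fin d)), ENNReal.ofReal ((Real.log 2 + L) * pt y)
          = ENNReal.ofReal (Real.log 2 + L) * ENNReal.ofReal (pt y) := fun y =>
        ENNReal.ofReal_mul hlogL
      simp_rw [heq]
      rw [lintegral_const_mul _ (hpt_cont.measurable.ennreal_ofReal),
        ← ofReal_integral_eq_lintegral_ofReal hpt_int
          (Filter.Eventually.of_forall hpt_nonneg),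
        hpt_integral, ENNReal.ofReal_one, mul_one]
    have hG2 : (∫⁻ y, (Metric.ball x r').indicator
          (fun y => ENNReal.ofReal (max (Real.log (1 / ‖y - x‖)) 0)) y)
        = ∫⁻ z in Metric.ball (0 : (EuclideanSpace ℝ (Fin d))) r',
            ENNReal.ofReal (max (Real.log (1 / ‖z‖)) 0) := by
      have heq : ∀ y : (EuclideanSpace ℝ (Fin d)), (Metric.ball x r').indicator
          (fun y => ENNReal.ofReal (max (Real.log (1 / ‖y - x‖)) 0)) y
          = (Metric.ball (0 : (EuclideanSpace ℝ (Fin d))) r').indicator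
              (fun z => ENNReal.ofReal (max (Real.log (1 / ‖z‖)) 0)) (y - x) := by
        intro y
        by_cases hy : y ∈ Metric.ball x r'
        · rw [Set.indicator_of_mem hy, Set.indicator_of_mem
            (by rw [mem_ball_zero_iff]; rw [mem_ball_iff_norm] at hy; exact hy)]
        · rw [Set.indicator_of_notMem hy, Set.indicator_of_notMem
            (by rw [mem_ball_zero_iff]; rw [mem_ball_iff_norm] at hy; exact hy)]
      simp_rw [heq]
      rw [lintegral_sub_right_eq_self ((Metric.ball (0 : (EuclideanSpace ℝ (Fin d))) r').indicator
        (fun z => ENNReal.ofReal (max (Real.log (1 / ‖z‖)) 0))) x]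
      exact lintegral_indicator measurableSet_ball _
    have hKEY := hk_key d hd hr'0 hr'1
    -- real-number endgame
    have hMr : M * r' ^ d ≤ K := by
      have h1 : M ≤ K / ‖x‖ ^ d := hk_M_bound d ht hR
      have h2 : r' ^ d ≤ ‖x‖ ^ d := by
        apply pow_le_pow_left₀ hr'0.le
        linarith
      calc M * r' ^ d ≤ (K / ‖x‖ ^ d) * ‖x‖ ^ d :=
            mul_le_mul h1 h2 (by positivity) (by positivity)
        _ = K := by field_simp
    have hMrlog : M * r' ^ d * Real.log (1 / r') ≤ K * (1 + L) := by
      rcases le_or_gt (‖x‖ / 2) 1 with hc | hc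
      · have hre : r' = ‖x‖ / 2 := min_eq_left hc
        have h4 : Real.log (1 / r') ≤ 1 + L := by
          rw [hre]
          have h3 : (1:ℝ) / (‖x‖ / 2) = 2 * (1 / ‖x‖) := by field_simp
          rw [h3, Real.log_mul (by norm_num) (by positivity)]
          have := le_max_left (Real.log (1 / ‖x‖)) 0
          linarith
        exact mul_le_mul hMr h4 hlogr' hK0.le
      · have hre : r' = 1 := min_eq_right hc.le
        have hlog1 : Real.log (1 / (1:ℝ)) = 0 := by norm_num
        rw [hre, hlog1, mul_zero]
        nlinarith [hK0, hL0]
    have hreal : (Real.log 2 + L) + M * (V * (r' ^ d * (4 * Real.log 2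
          + 2 * Real.log (1 / r')))) ≤ (1 + 6 * K * V) * (1 + L) := by
      have e : M * (V * (r' ^ d * (4 * Real.log 2 + 2 * Real.log (1 / r'))))
          = 4 * Real.log 2 * V * (M * r' ^ d)
            + 2 * V * (M * r' ^ d * Real.log (1 / r')) := by ring
      rw [e]
      have b1 : 4 * Real.log 2 * V * (M * r' ^ d) ≤ 4 * V * K := by
        have hMr0 : 0 ≤ M * r' ^ d := by positivity
        have hb1' : Real.log 2 * (M * r' ^ d) ≤ K := by
          calc Real.log 2 * (M * r' ^ d) ≤ 1 * K :=
                mul_le_mul hlog2one hMr hMr0 zero_le_one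
            _ = K := one_mul K
        have h := mul_le_mul_of_nonneg_left hb1' (show (0:ℝ) ≤ 4 * V by positivity)
        nlinarith [h]
      have b2 : 2 * V * (M * r' ^ d * Real.log (1 / r')) ≤ 2 * V * (K * (1 + L)) :=
        mul_le_mul_of_nonneg_left hMrlog (by positivity)
      nlinarith [mul_nonneg (mul_nonneg hK0.le hV0) hL0, mul_nonneg hK0.le hV0]
    calc (∫⁻ y, ENNReal.ofReal (pt y * max (Real.log (1 / ‖y - x‖)) 0))
        ≤ _ := step1
      _ = ENNReal.ofReal (Real.log 2 + L) + ENNReal.ofReal M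
            * ∫⁻ z in Metric.ball (0 : (EuclideanSpace ℝ (Fin d))) r',
                ENNReal.ofReal (max (Real.log (1 / ‖z‖)) 0) := by
          rw [step2, hG1, hG2]
      _ ≤ ENNReal.ofReal (Real.log 2 + L) + ENNReal.ofReal M
            * ENNReal.ofReal (V * (r' ^ d * (4 * Real.log 2 + 2 * Real.log (1 / r')))) := by
          exact add_le_add_right (mul_le_mul_right hKEY _) _
      _ = ENNReal.ofReal ((Real.log 2 + L)
            + M * (V * (r' ^ d * (4 * Real.log 2 + 2 * Real.log (1 / r'))))) := by
          have h4l : 0 ≤ 4 * Real.log 2 + 2 * Real.log (1 / r') := by nlinarith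
          rw [← ENNReal.ofReal_mul hM0, ← ENNReal.ofReal_add hlogL
            (mul_nonneg hM0 (mul_nonneg hV0
              (mul_nonneg (pow_nonneg hr'0.le d) h4l)))]
      _ ≤ ENNReal.ofReal ((1 + 6 * K * V) * (1 + L)) := ENNReal.ofReal_le_ofReal hreal
  have hfin := ENNReal.toReal_mono ENNReal.ofReal_ne_top hlint
  rwa [ENNReal.toReal_ofReal hCpos] at hfin
end

section
/- Let d ∈ {2, 3}, and let (v_n)_{n≥1} be functions on [0,∞) × ℝ^d satisfying the recursion v_n(t,z) = Σ_{k=1}^{n-1} ∫₀^t ∫ p_{t-s}(z - y) v_k(s,y) v_{n-k}(s,y) dy ds for n ≥ 2. If there are constants r, α, β ≥ 0 with |v₁(t,z)| ≤ r((t+α)^{1/2} + β) for all t ≥ 0 and z, then with c₁ = 1 and c_n = Σ_{k=1}^{n-1} c_k c_{n-k} for n ≥ 2, one has |v_n(t,z)| ≤ c_n r^n (t+α)^{(n-1)/2} ((t+α)^{1/2} + β)^{2n-1} for all n ≥ 1, t ≥ 0, z ∈ ℝ^d. -/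
open MeasureTheory Real Filter Topology

lemma heatKernel_nonneg (d : ℕ) (t : ℝ) (ht : 0 ≤ t) (y : EuclideanSpace ℝ (Fin d)) :
    0 ≤ heatKernel d t y := by
  unfold heatKernel
  have : (0:ℝ) ≤ 2 * Real.pi * t := by positivity
  positivity

lemma heatKernel_zero (d : ℕ) (hd : d ≠ 0) (y : EuclideanSpace ℝ (Fin d)) :
    heatKernel d 0 y = 0 := by
  unfold heatKernel
  rw [mul_zero, Real.zero_rpow, zero_mul]
  intro h
  have : (d:ℝ) = 0 := by
    field_simp at h
    linarith
  exact hd (by exact_mod_cast this)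

lemma heatKernel_eq (d : ℕ) (t : ℝ) (ht : 0 < t) (y : EuclideanSpace ℝ (Fin d)) :
    heatKernel d t y = (2 * Real.pi * t) ^ (-(d : ℝ) / 2) * Real.exp (-(1/(2*t)) * ‖y‖ ^ 2) := by
  unfold heatKernel
  congr 2
  field_simp

lemma heatKernel_integrable (d : ℕ) (t : ℝ) (ht : 0 < t) :
    Integrable (heatKernel d t) := by
  have h1 : Integrable (fun y : EuclideanSpace ℝ (Fin d) =>
      Real.exp (-(1/(2*t)) * ‖y‖ ^ 2)) := by
    have := GaussianFourier.integrable_cexp_neg_mul_sq_norm_add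
      (b := ((1/(2*t) : ℝ) : ℂ)) (V := EuclideanSpace ℝ (Fin d)) (by simpa using by positivity) 0 0
    have h2 := this.norm
    refine h2.congr ?_
    filter_upwards with y
    rw [Complex.norm_exp]
    push_cast
    norm_num
    left
    norm_cast
  have := h1.const_mul ((2 * Real.pi * t) ^ (-(d : ℝ) / 2))
  refine this.congr ?_
  filter_upwards with y
  rw [heatKernel_eq d t ht]

lemma heatKernel_integral (d : ℕ) (t : ℝ) (ht : 0 < t) :
    ∫ y : EuclideanSpace ℝ (Fin d), heatKernel d t y = 1 := by
  have hb : (0:ℝ) < 1/(2*t) := by positivity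
  have hG := GaussianFourier.integral_rexp_neg_mul_sq_norm (V := EuclideanSpace ℝ (Fin d)) hb
  simp only [heatKernel_eq d t ht]
  rw [MeasureTheory.integral_const_mul, hG]
  have hfr : (Module.finrank ℝ (EuclideanSpace ℝ (Fin d)) : ℝ) = d := by simp
  rw [hfr]
  have h2 : Real.pi / (1/(2*t)) = 2 * Real.pi * t := by field_simp
  rw [h2]
  have hpos : (0:ℝ) < 2 * Real.pi * t := by positivity
  rw [← Real.rpow_add hpos]
  rw [show -(d:ℝ)/2 + d/2 = 0 by ring, Real.rpow_zero]

noncomputable def Mb (c : ℕ → ℝ) (r α β : ℝ) (n : ℕ) (t : ℝ) : ℝ :=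
  c n * r ^ n * (t + α) ^ (((n : ℝ) - 1) / 2) * ((t + α) ^ ((1 : ℝ) / 2) + β) ^ (2 * n - 1)

lemma Mb_nonneg {c : ℕ → ℝ} {r α β : ℝ} {n : ℕ} {t : ℝ} (hc : 0 ≤ c n) (hr : 0 ≤ r)
    (hα : 0 ≤ α) (hβ : 0 ≤ β) (ht : 0 ≤ t) : 0 ≤ Mb c r α β n t := by
  unfold Mb
  have h1 : (0:ℝ) ≤ t + α := by linarith
  positivity

lemma Mb_mono {c : ℕ → ℝ} {r α β : ℝ} {n : ℕ} {s t : ℝ} (hn : 1 ≤ n) (hc : 0 ≤ c n)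
    (hr : 0 ≤ r) (hα : 0 ≤ α) (hβ : 0 ≤ β) (hs : 0 ≤ s) (hst : s ≤ t) :
    Mb c r α β n s ≤ Mb c r α β n t := by
  unfold Mb
  have h1 : (0:ℝ) ≤ s + α := by linarith
  have h2 : s + α ≤ t + α := by linarith
  have he : (0:ℝ) ≤ ((n : ℝ) - 1) / 2 := by
    have : (1:ℝ) ≤ n := by exact_mod_cast hn
    linarith
  have hX : (s + α) ^ (((n:ℝ) - 1) / 2) ≤ (t + α) ^ (((n:ℝ) - 1) / 2) :=
    Real.rpow_le_rpow h1 h2 he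
  have hY : ((s + α) ^ ((1:ℝ)/2) + β) ^ (2 * n - 1) ≤
      ((t + α) ^ ((1:ℝ)/2) + β) ^ (2 * n - 1) := by
    apply pow_le_pow_left₀ (by positivity)
    exact add_le_add (Real.rpow_le_rpow h1 h2 (by norm_num : (0:ℝ) ≤ 1/2)) le_rfl
  have hcr : 0 ≤ c n * r ^ n := mul_nonneg hc (pow_nonneg hr n)
  apply mul_le_mul (mul_le_mul_of_nonneg_left hX hcr) hY (by positivity)
  exact mul_nonneg hcr (Real.rpow_nonneg (by linarith) _)

theorem cumulant_recursion_bound (d : ℕ) (hd : d = 2 ∨ d = 3)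
    (v : ℕ → ℝ → EuclideanSpace ℝ (Fin d) → ℝ)
    (c : ℕ → ℝ) (hc1 : c 1 = 1)
    (hc : ∀ n ≥ 2, c n = ∑ k ∈ Finset.Ico 1 n, c k * c (n - k))
    (r α β : ℝ) (hr : 0 ≤ r) (hα : 0 ≤ α) (hβ : 0 ≤ β)
    (hv1 : ∀ t : ℝ, 0 ≤ t → ∀ z, |v 1 t z| ≤ r * ((t + α) ^ ((1 : ℝ) / 2) + β))
    (hrec : ∀ n ≥ 2, ∀ t : ℝ, 0 ≤ t → ∀ z, v n t z =
      ∑ k ∈ Finset.Ico 1 n, ∫ s in Set.Ioc (0 : ℝ) t,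
        ∫ y, heatKernel d (t - s) (z - y) * (v k s y * v (n - k) s y)) :
    ∀ n ≥ 1, ∀ t : ℝ, 0 ≤ t → ∀ z,
      |v n t z| ≤ c n * r ^ n * (t + α) ^ (((n : ℝ) - 1) / 2) *
        ((t + α) ^ ((1 : ℝ) / 2) + β) ^ (2 * n - 1) := by
  have hd0 : d ≠ 0 := by rcases hd with h | h <;> omega
  -- nonnegativity of c
  have hcn : ∀ n, 1 ≤ n → 0 ≤ c n := by
    intro n
    induction n using Nat.strong_induction_on with
    | _ n ihn =>
      intro hn
      rcases eq_or_lt_of_le hn with h1 | h2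
      · rw [← h1, hc1]; norm_num
      · rw [hc n h2]
        apply Finset.sum_nonneg
        intro k hk
        rw [Finset.mem_Ico] at hk
        exact mul_nonneg (ihn k (by omega) hk.1) (ihn (n - k) (by omega) (by omega))
  -- restate goal with Mb
  suffices H : ∀ n, 1 ≤ n → ∀ t : ℝ, 0 ≤ t → ∀ z, |v n t z| ≤ Mb c r α β n t by
    intro n hn t ht z; exact H n hn t ht z
  intro n
  induction n using Nat.strong_induction_on with
  | _ n ih =>
    intro hn t ht z
    rcases eq_or_lt_of_le hn with h1 | h2
    · -- base case n = 1
      rw [← h1]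
      unfold Mb
      rw [hc1]
      have e1 : ((((1:ℕ)):ℝ) - 1) / 2 = 0 := by norm_num
      rw [e1, Real.rpow_zero]
      norm_num
      simpa using hv1 t ht z
    · -- inductive case n ≥ 2
      have htα0 : (0:ℝ) ≤ t + α := by linarith
      rcases eq_or_lt_of_le ht with ht0 | htpos
      · -- t = 0
        have hempty : Set.Ioc (0:ℝ) t = ∅ := by rw [← ht0]; simp
        rw [hrec n h2 t ht z]
        simp only [hempty, Measure.restrict_empty, integral_zero_measure,
          Finset.sum_const_zero, abs_zero]
        exact Mb_nonneg (hcn n hn) hr hα hβ ht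
      · -- 0 < t
        have htα : (0:ℝ) < t + α := by linarith
        set A := (t + α) ^ ((1:ℝ)/2) with hA
        set S := A + β with hS
        have hA0 : 0 ≤ A := Real.rpow_nonneg htα0 _
        have hS0 : 0 ≤ S := by positivity
        -- pointwise bound on the inner double integrals
        have inner_bd : ∀ k ∈ Finset.Ico 1 n, ∀ s ∈ Set.Ioc (0:ℝ) t,
            ‖∫ y, heatKernel d (t - s) (z - y) * (v k s y * v (n - k) s y)‖ ≤
              Mb c r α β k t * Mb c r α β (n - k) t := by
          intro k hk s hs
          rw [Finset.mem_Ico] at hk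
          obtain ⟨hk1, hkn⟩ := hk
          obtain ⟨hs0, hst⟩ := hs
          have hMk0 : 0 ≤ Mb c r α β k t := Mb_nonneg (hcn k hk1) hr hα hβ ht
          have hMnk0 : 0 ≤ Mb c r α β (n - k) t := Mb_nonneg (hcn (n-k) (by omega)) hr hα hβ ht
          rcases eq_or_lt_of_le hst with hseq | hslt
          · have hzero : ∀ y, heatKernel d (t - s) (z - y) = 0 := by
              intro y; rw [hseq, sub_self]; exact heatKernel_zero d hd0 _
            simp only [hzero, zero_mul, integral_zero, norm_zero]
            exact mul_nonneg hMk0 hMnk0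
          · have hτ : 0 < t - s := by linarith
            have hbk : ∀ y, |v k s y| ≤ Mb c r α β k t := fun y =>
              le_trans (ih k (by omega) hk1 s hs0.le y)
                (Mb_mono hk1 (hcn k hk1) hr hα hβ hs0.le hst)
            have hbnk : ∀ y, |v (n - k) s y| ≤ Mb c r α β (n - k) t := fun y =>
              le_trans (ih (n - k) (by omega) (by omega) s hs0.le y)
                (Mb_mono (by omega) (hcn (n-k) (by omega)) hr hα hβ hs0.le hst)
            have hInt : Integrable (fun y : EuclideanSpace ℝ (Fin d) =>
                heatKernel d (t - s) (z - y) * (Mb c r α β k t * Mb c r α β (n - k) t)) :=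
              ((heatKernel_integrable d (t - s) hτ).comp_sub_left z).mul_const _
            have := norm_integral_le_of_norm_le hInt (by
              filter_upwards with y
              have hKnn := heatKernel_nonneg d (t - s) hτ.le (z - y)
              calc ‖heatKernel d (t - s) (z - y) * (v k s y * v (n - k) s y)‖
                  = heatKernel d (t - s) (z - y) * (|v k s y| * |v (n - k) s y|) := by
                    rw [Real.norm_eq_abs, abs_mul, abs_mul, abs_of_nonneg hKnn]
                _ ≤ heatKernel d (t - s) (z - y) *
                      (Mb c r α β k t * Mb c r α β (n - k) t) :=
                    mul_le_mul_of_nonneg_left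
                      (mul_le_mul (hbk y) (hbnk y) (abs_nonneg _) hMk0) hKnn)
            refine this.trans ?_
            rw [MeasureTheory.integral_mul_const,
              integral_sub_left_eq_self (heatKernel d (t - s)) volume z,
              heatKernel_integral d (t - s) hτ, one_mul]
        -- bound each outer integral
        have outer_bd : ∀ k ∈ Finset.Ico 1 n,
            |∫ s in Set.Ioc (0:ℝ) t,
              ∫ y, heatKernel d (t - s) (z - y) * (v k s y * v (n - k) s y)| ≤
              t * (Mb c r α β k t * Mb c r α β (n - k) t) := by
          intro k hk
          have hC0 : 0 ≤ Mb c r α β k t * Mb c r α β (n - k) t := by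
            rw [Finset.mem_Ico] at hk
            exact mul_nonneg (Mb_nonneg (hcn k hk.1) hr hα hβ ht)
              (Mb_nonneg (hcn (n-k) (by omega)) hr hα hβ ht)
          have hInt : Integrable (fun _ : ℝ => Mb c r α β k t * Mb c r α β (n - k) t)
              (volume.restrict (Set.Ioc (0:ℝ) t)) := by
            refine (integrableOn_const_iff (by finiteness)).2 (Or.inr ?_)
            exact measure_Ioc_lt_top
          have := norm_integral_le_of_norm_le hInt (by
            rw [ae_restrict_iff' measurableSet_Ioc]
            filter_upwards with s hs
            exact inner_bd k hk s hs)
          rw [Real.norm_eq_abs] at this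
          refine this.trans ?_
          rw [MeasureTheory.setIntegral_const, smul_eq_mul, measureReal_def, Real.volume_Ioc]
          rw [ENNReal.toReal_ofReal (by linarith)]
          norm_num
        -- sum it up
        have hsum : |v n t z| ≤ ∑ k ∈ Finset.Ico 1 n,
            t * (Mb c r α β k t * Mb c r α β (n - k) t) := by
          rw [hrec n h2 t ht z]
          exact le_trans (Finset.abs_sum_le_sum_abs _ _) (Finset.sum_le_sum outer_bd)
        refine hsum.trans ?_
        -- each summand equals c k * c (n-k) * T
        have hterm : ∀ k ∈ Finset.Ico 1 n,
            t * (Mb c r α β k t * Mb c r α β (n - k) t) =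
            c k * c (n - k) * (t * r ^ n * (t + α) ^ (((n : ℝ) - 2) / 2) * S ^ (2 * n - 2)) := by
          intro k hk
          rw [Finset.mem_Ico] at hk
          obtain ⟨hk1, hkn⟩ := hk
          unfold Mb
          rw [← hA, ← hS]
          have hpow : r ^ k * r ^ (n - k) = r ^ n := by
            rw [← pow_add]; congr 1; omega
          have hrpow : (t + α) ^ (((k:ℝ) - 1) / 2) * (t + α) ^ (((↑(n - k):ℝ) - 1) / 2) =
              (t + α) ^ (((n:ℝ) - 2) / 2) := by
            rw [← Real.rpow_add htα]
            congr 1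
            rw [Nat.cast_sub (by omega)]
            ring
          have hSpow : S ^ (2 * k - 1) * S ^ (2 * (n - k) - 1) = S ^ (2 * n - 2) := by
            rw [← pow_add]; congr 1; omega
          calc t * (c k * r ^ k * (t + α) ^ (((k:ℝ) - 1) / 2) * S ^ (2 * k - 1) *
                (c (n - k) * r ^ (n - k) * (t + α) ^ (((↑(n - k):ℝ) - 1) / 2) *
                  S ^ (2 * (n - k) - 1)))
              = c k * c (n - k) * (t * (r ^ k * r ^ (n - k)) *
                  ((t + α) ^ (((k:ℝ) - 1) / 2) * (t + α) ^ (((↑(n - k):ℝ) - 1) / 2)) *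
                  (S ^ (2 * k - 1) * S ^ (2 * (n - k) - 1))) := by ring
            _ = c k * c (n - k) * (t * r ^ n * (t + α) ^ (((n : ℝ) - 2) / 2) *
                  S ^ (2 * n - 2)) := by rw [hpow, hrpow, hSpow]
        rw [Finset.sum_congr rfl hterm, ← Finset.sum_mul, ← hc n h2]
        -- final comparison
        unfold Mb
        rw [← hA, ← hS]
        have hAA : A * A = t + α := by
          rw [hA, ← Real.rpow_add htα]
          norm_num
        have htAA : t ≤ A * A := by rw [hAA]; linarith
        have hAS : A ≤ S := le_add_of_nonneg_right hβ
        have h1 : A * (t + α) ^ (((n:ℝ) - 2) / 2) = (t + α) ^ (((n:ℝ) - 1) / 2) := by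
          rw [hA, ← Real.rpow_add htα]
          congr 1
          ring
        have h2' : S ^ (2 * n - 2) * S = S ^ (2 * n - 1) := by
          rw [← pow_succ]; congr 1; omega
        have key : t * r ^ n * (t + α) ^ (((n:ℝ) - 2) / 2) * S ^ (2 * n - 2) ≤
            r ^ n * (t + α) ^ (((n:ℝ) - 1) / 2) * S ^ (2 * n - 1) := by
          have hX : (0:ℝ) ≤ (t + α) ^ (((n:ℝ) - 2) / 2) := Real.rpow_nonneg htα0 _
          have step1 : t * r ^ n * (t + α) ^ (((n:ℝ) - 2) / 2) * S ^ (2 * n - 2) ≤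
              (A * S) * r ^ n * (t + α) ^ (((n:ℝ) - 2) / 2) * S ^ (2 * n - 2) := by
            have : t ≤ A * S := htAA.trans (by gcongr)
            gcongr
          refine step1.trans ?_
          have : (A * S) * r ^ n * (t + α) ^ (((n:ℝ) - 2) / 2) * S ^ (2 * n - 2) =
              r ^ n * (A * (t + α) ^ (((n:ℝ) - 2) / 2)) * (S ^ (2 * n - 2) * S) := by ring
          rw [this, h1, h2']
        calc c n * (t * r ^ n * (t + α) ^ (((n:ℝ) - 2) / 2) * S ^ (2 * n - 2)) ≤
            c n * (r ^ n * (t + α) ^ (((n:ℝ) - 1) / 2) * S ^ (2 * n - 1)) :=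
              mul_le_mul_of_nonneg_left key (hcn n hn)
          _ = c n * r ^ n * (t + α) ^ (((n:ℝ) - 1) / 2) * S ^ (2 * n - 1) := by ring
end
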